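/- Let K be a field, let t : ℕ → ℕ → K satisfy t(i,i) = 1 for all i and t(i,j) = 0 whenever j > i, and let M : ℕ → K satisfy M(n) ≠ 0 for all n together with the relations ∑_{j=0}^{n} (-1)^{n-j} t(n,j) M(j) = (if n = 0 then 1 else 0) for every n ≥ 0. Then for every n ≥ 0 the determinant of the n×n matrix with entries t(i+1, j), 0 ≤ i, j ≤ n-1, equals M(n). -/

import Mathlib

open Matrix in

theorem stmt_0 (K : Type*) [Field K] (t : ℕ → ℕ → K) (M : ℕ → K)
    (ht_diag : ∀ i, t i i = 1)
    (ht_tri : ∀ i j, i < j → t i j = 0)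
    (hM : ∀ n, M n ≠ 0)
    (hrel : ∀ n, ∑ j ∈ Finset.range (n + 1), (-1 : K) ^ (n - j) * t n j * M j
      = if n = 0 then 1 else 0) :
    ∀ n : ℕ, Matrix.det (Matrix.of fun i j : Fin n => t ((i : ℕ) + 1) (j : ℕ)) = M n := by
  intro n
  classical
  set T : Matrix (Fin (n + 1)) (Fin (n + 1)) K := Matrix.of fun i j => t i j with hT
  set y : Fin (n + 1) → K := fun j => (-1 : K) ^ (j : ℕ) * M j with hy
  set b : Fin (n + 1) → K := Pi.single (0 : Fin (n + 1)) 1 with hb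
  -- T is lower triangular with ones on diagonal
  have hTtri : T.BlockTriangular OrderDual.toDual := by
    intro i j hij
    exact ht_tri i j hij
  have hdet : T.det = 1 := by
    rw [Matrix.det_of_lowerTriangular T hTtri]
    simp [hT, ht_diag]
  -- T *ᵥ y = b
  have hmv : T *ᵥ y = b := by
    funext i
    have key := hrel i
    have h1 : (T *ᵥ y) i = ∑ j ∈ Finset.range (n + 1), t i j * ((-1 : K) ^ j * M j) := by
      rw [Matrix.mulVec, dotProduct, ← Fin.sum_univ_eq_sum_range
        (fun j => t i j * ((-1 : K) ^ j * M j)) (n + 1)]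
      rfl
    have h2 : ∑ j ∈ Finset.range (n + 1), t i j * ((-1 : K) ^ j * M j)
        = ∑ j ∈ Finset.range ((i : ℕ) + 1), t i j * ((-1 : K) ^ j * M j) := by
      refine (Finset.sum_subset (by
        intro x hx
        simp only [Finset.mem_range] at hx ⊢
        have := i.isLt; omega) ?_).symm
      intro x hx hx'
      simp only [Finset.mem_range] at hx hx'
      rw [ht_tri i x (by omega)]
      ring
    have h3 : ∀ j ∈ Finset.range ((i : ℕ) + 1),
        t i j * ((-1 : K) ^ j * M j)
          = (-1 : K) ^ (i : ℕ) * ((-1 : K) ^ ((i : ℕ) - j) * t i j * M j) := by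
      intro j hj
      simp only [Finset.mem_range] at hj
      have hpow : (-1 : K) ^ j = (-1 : K) ^ (i : ℕ) * (-1 : K) ^ ((i : ℕ) - j) := by
        rw [← pow_add]
        have h : (i : ℕ) + ((i : ℕ) - j) = 2 * ((i : ℕ) - j) + j := by omega
        rw [h, pow_add, pow_mul]
        norm_num
      rw [hpow]; ring
    rw [h1, h2, Finset.sum_congr rfl h3, ← Finset.mul_sum, key]
    by_cases h0 : (i : ℕ) = 0
    · have : i = 0 := Fin.ext h0
      subst this
      simp [hb]
    · have : i ≠ 0 := fun h => h0 (by simp [h])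
      simp [hb, h0, Pi.single_eq_of_ne this]
  -- recover y from b via the adjugate
  have hyb : y = T.adjugate *ᵥ b := by
    rw [← hmv, Matrix.mulVec_mulVec, Matrix.adjugate_mul, hdet, one_smul, Matrix.one_mulVec]
  have hcr : Matrix.cramer T b (Fin.last n) = y (Fin.last n) := by
    rw [hyb, Matrix.cramer_eq_adjugate_mulVec]
  -- compute the cramer determinant by Laplace expansion along the last column
  have hexp : (T.updateCol (Fin.last n) b).det
      = (-1 : K) ^ n * Matrix.det (Matrix.of fun i j : Fin n => t ((i : ℕ) + 1) (j : ℕ)) := by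
    rw [Matrix.det_succ_column (T.updateCol (Fin.last n) b) (Fin.last n)]
    rw [Finset.sum_eq_single (0 : Fin (n + 1))]
    · have hcol : (T.updateCol (Fin.last n) b) 0 (Fin.last n) = 1 := by
        rw [Matrix.updateCol_apply, if_pos rfl, hb, Pi.single_eq_same]
      rw [hcol]
      have hsub : (T.updateCol (Fin.last n) b).submatrix
            (Fin.succAbove 0) (Fin.succAbove (Fin.last n))
          = Matrix.of fun i j : Fin n => t ((i : ℕ) + 1) (j : ℕ) := by
        ext i j
        rw [Matrix.submatrix_apply, Fin.succAbove_zero, Fin.succAbove_last,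
          Matrix.updateCol_apply, if_neg (Fin.castSucc_lt_last j).ne]
        simp [hT]
      rw [hsub]
      simp
    · intro i _ hi
      have hcol : (T.updateCol (Fin.last n) b) i (Fin.last n) = 0 := by
        rw [Matrix.updateCol_apply, if_pos rfl, hb, Pi.single_eq_of_ne hi]
      rw [hcol]
      ring
    · intro h; exact absurd (Finset.mem_univ _) h
  have hfinal := hcr
  rw [Matrix.cramer_apply, hexp, hy] at hfinal
  simp only [Fin.val_last] at hfinal
  have hne : ((-1 : K) ^ n) ≠ 0 := by
    apply pow_ne_zero; norm_num
  field_simp at hfinal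
  exact hfinal
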